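/- Let R₁, R₂ be commutative rings with identity, Mᵢ an Rᵢ-module and Sᵢ ⊆ Rᵢ a multiplicatively closed subset for i = 1, 2. Set M = M₁ × M₂, R = R₁ × R₂, and S = S₁ × S₂. Then M is a fully S-idempotent R-module if and only if M₁ is a fully S₁-idempotent R₁-module and M₂ is a fully S₂-idempotent R₂-module. -/

import Mathlib

open Pointwise
section ProdModule

variable {R₁ R₂ M₁ M₂ : Type*} [CommRing R₁] [CommRing R₂]
  [AddCommGroup M₁] [Module R₁ M₁] [AddCommGroup M₂] [Module R₂ M₂]

/-- Componentwise scalar multiplication of `R₁ × R₂` on `M₁ × M₂`. -/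
instance Prod.instSMulProdProd : SMul (R₁ × R₂) (M₁ × M₂) :=
  ⟨fun r m => (r.1 • m.1, r.2 • m.2)⟩

@[simp] theorem Prod.prod_smul_def (r : R₁ × R₂) (m : M₁ × M₂) :
    r • m = (r.1 • m.1, r.2 • m.2) := rfl

/-- `M₁ × M₂` is an `R₁ × R₂`-module with componentwise operations. -/
instance Prod.instModuleProdProd : Module (R₁ × R₂) (M₁ × M₂) where
  one_smul m := by ext <;> simp
  mul_smul r s m := by ext <;> simp [mul_smul]
  smul_zero r := by ext <;> simp
  smul_add r m n := by ext <;> simp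
  add_smul r s m := by ext <;> simp [add_smul]
  zero_smul m := by ext <;> simp

end ProdModule

/-- A submodule `N` of `M` is `S`-idempotent if there is `s ∈ S` with
`s • N ⊆ (N :_R M)² M ⊆ N`. -/
def Submodule.SIdempotent {R M : Type*} [CommRing R] [AddCommGroup M] [Module R M]
    (S : Submonoid R) (N : Submodule R M) : Prop :=
  ∃ s ∈ S, s • N ≤ (N.colon ⊤) ^ 2 • (⊤ : Submodule R M) ∧
    (N.colon ⊤) ^ 2 • (⊤ : Submodule R M) ≤ N

/-- `M` is fully `S`-idempotent if every submodule is `S`-idempotent. -/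
def Module.FullySIdempotent (R M : Type*) [CommRing R] [AddCommGroup M] [Module R M]
    (S : Submonoid R) : Prop :=
  ∀ N : Submodule R M, N.SIdempotent S

section Aux

open Pointwise

variable {R₁ R₂ M₁ M₂ : Type*} [CommRing R₁] [CommRing R₂]
  [AddCommGroup M₁] [Module R₁ M₁] [AddCommGroup M₂] [Module R₂ M₂]

/-- Product of submodules as a submodule of `M₁ × M₂` over `R₁ × R₂`. -/
def prodSub (P : Submodule R₁ M₁) (Q : Submodule R₂ M₂) :
    Submodule (R₁ × R₂) (M₁ × M₂) where
  carrier := {x | x.1 ∈ P ∧ x.2 ∈ Q}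
  add_mem' ha hb := ⟨P.add_mem ha.1 hb.1, Q.add_mem ha.2 hb.2⟩
  zero_mem' := ⟨P.zero_mem, Q.zero_mem⟩
  smul_mem' r x hx := ⟨P.smul_mem r.1 hx.1, Q.smul_mem r.2 hx.2⟩

@[simp] lemma mem_prodSub {P : Submodule R₁ M₁} {Q : Submodule R₂ M₂} {x : M₁ × M₂} :
    x ∈ prodSub P Q ↔ x.1 ∈ P ∧ x.2 ∈ Q := Iff.rfl

lemma prodSub_top : (⊤ : Submodule (R₁ × R₂) (M₁ × M₂)) = prodSub ⊤ ⊤ := by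
  ext x; simp

lemma prodSub_le_prodSub {P P' : Submodule R₁ M₁} {Q Q' : Submodule R₂ M₂} :
    prodSub P Q ≤ prodSub P' Q' ↔ P ≤ P' ∧ Q ≤ Q' := by
  constructor
  · intro h
    exact ⟨fun x hx => (h (x := (x, 0)) ⟨hx, Q.zero_mem⟩).1,
      fun y hy => (h (x := (0, y)) ⟨P.zero_mem, hy⟩).2⟩
  · rintro ⟨h₁, h₂⟩ x hx
    exact ⟨h₁ hx.1, h₂ hx.2⟩

/-- Projections of a submodule of the product. -/
def fstSub (N : Submodule (R₁ × R₂) (M₁ × M₂)) : Submodule R₁ M₁ where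
  carrier := {x | ((x, 0) : M₁ × M₂) ∈ N}
  add_mem' {a b} ha hb := by
    have := N.add_mem ha hb
    simpa using this
  zero_mem' := by exact N.zero_mem
  smul_mem' r x hx := by
    have := N.smul_mem (r, (0 : R₂)) hx
    simpa using this

def sndSub (N : Submodule (R₁ × R₂) (M₁ × M₂)) : Submodule R₂ M₂ where
  carrier := {y | ((0, y) : M₁ × M₂) ∈ N}
  add_mem' {a b} ha hb := by
    have := N.add_mem ha hb
    simpa using this
  zero_mem' := by exact N.zero_mem
  smul_mem' r y hy := by
    have := N.smul_mem ((0 : R₁), r) hy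
    simpa using this

@[simp] lemma mem_fstSub {N : Submodule (R₁ × R₂) (M₁ × M₂)} {x : M₁} :
    x ∈ fstSub N ↔ ((x, 0) : M₁ × M₂) ∈ N := Iff.rfl

@[simp] lemma mem_sndSub {N : Submodule (R₁ × R₂) (M₁ × M₂)} {y : M₂} :
    y ∈ sndSub N ↔ ((0, y) : M₁ × M₂) ∈ N := Iff.rfl

lemma prodSub_fstSub_sndSub (N : Submodule (R₁ × R₂) (M₁ × M₂)) :
    N = prodSub (fstSub N) (sndSub N) := by
  ext ⟨x, y⟩
  simp only [mem_prodSub, mem_fstSub, mem_sndSub]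
  constructor
  · intro h
    constructor
    · have := N.smul_mem ((1 : R₁), (0 : R₂)) h
      simpa using this
    · have := N.smul_mem ((0 : R₁), (1 : R₂)) h
      simpa using this
  · rintro ⟨h₁, h₂⟩
    have := N.add_mem h₁ h₂
    simpa using this

lemma colon_prodSub (P : Submodule R₁ M₁) (Q : Submodule R₂ M₂) :
    (prodSub P Q).colon ⊤ = Ideal.prod (P.colon ⊤) (Q.colon ⊤) := by
  ext ⟨r₁, r₂⟩
  rw [Ideal.mem_prod _ _]
  simp only [Submodule.mem_colon]
  constructor
  · intro h
    constructor
    · intro m₁ _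
      exact (h (m₁, 0) trivial).1
    · intro m₂ _
      exact (h (0, m₂) trivial).2
  · rintro ⟨h₁, h₂⟩ ⟨m₁, m₂⟩ _
    exact ⟨h₁ m₁ trivial, h₂ m₂ trivial⟩

lemma ideal_prod_smul_prodSub (I : Ideal R₁) (J : Ideal R₂)
    (P : Submodule R₁ M₁) (Q : Submodule R₂ M₂) :
    (Ideal.prod I J) • prodSub P Q = prodSub (I • P) (J • Q) := by
  apply le_antisymm
  · rw [Submodule.smul_le]
    rintro ⟨r₁, r₂⟩ hr ⟨n₁, n₂⟩ hn
    rw [Ideal.mem_prod _ _] at hr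
    exact ⟨Submodule.smul_mem_smul hr.1 hn.1, Submodule.smul_mem_smul hr.2 hn.2⟩
  · rintro ⟨x, y⟩ ⟨hx, hy⟩
    have hx' : ((x, 0) : M₁ × M₂) ∈ (Ideal.prod I J) • prodSub P Q := by
      refine Submodule.smul_induction_on
        (p := fun z => ((z, 0) : M₁ × M₂) ∈ (Ideal.prod I J) • prodSub P Q) hx ?_ ?_
      · intro r hr n hn
        have : ((r, (0:R₂)) : R₁ × R₂) • ((n, 0) : M₁ × M₂) ∈
            (Ideal.prod I J) • prodSub P Q :=
          Submodule.smul_mem_smul ((Ideal.mem_prod _ _).mpr ⟨hr, J.zero_mem⟩) ⟨hn, Q.zero_mem⟩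
        simpa using this
      · intro a b ha hb
        have := Submodule.add_mem _ ha hb
        simpa using this
    have hy' : ((0, y) : M₁ × M₂) ∈ (Ideal.prod I J) • prodSub P Q := by
      refine Submodule.smul_induction_on
        (p := fun z => ((0, z) : M₁ × M₂) ∈ (Ideal.prod I J) • prodSub P Q) hy ?_ ?_
      · intro r hr n hn
        have : (((0:R₁), r) : R₁ × R₂) • ((0, n) : M₁ × M₂) ∈
            (Ideal.prod I J) • prodSub P Q :=
          Submodule.smul_mem_smul ((Ideal.mem_prod _ _).mpr ⟨I.zero_mem, hr⟩) ⟨P.zero_mem, hn⟩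
        simpa using this
      · intro a b ha hb
        have := Submodule.add_mem _ ha hb
        simpa using this
    have := Submodule.add_mem _ hx' hy'
    simpa using this

lemma ideal_prod_sq_smul_top (I : Ideal R₁) (J : Ideal R₂) :
    (Ideal.prod I J) ^ 2 • (⊤ : Submodule (R₁ × R₂) (M₁ × M₂)) =
      prodSub (I ^ 2 • (⊤ : Submodule R₁ M₁)) (J ^ 2 • (⊤ : Submodule R₂ M₂)) := by
  rw [pow_two, pow_two, pow_two, ← Ideal.smul_eq_mul, ← Ideal.smul_eq_mul, ← Ideal.smul_eq_mul,
    Submodule.smul_assoc, Submodule.smul_assoc, Submodule.smul_assoc,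
    prodSub_top, ideal_prod_smul_prodSub, ideal_prod_smul_prodSub]

lemma pointwise_smul_le_iff {s₁ : R₁} {s₂ : R₂} {P A : Submodule R₁ M₁}
    {Q B : Submodule R₂ M₂} :
    ((s₁, s₂) : R₁ × R₂) • prodSub P Q ≤ prodSub A B ↔ s₁ • P ≤ A ∧ s₂ • Q ≤ B := by
  constructor
  · intro h
    constructor
    · intro x hx
      obtain ⟨n, hn, rfl⟩ := Set.mem_smul_set.mp hx
      have : ((s₁, s₂) : R₁ × R₂) • ((n, 0) : M₁ × M₂) ∈
          ((s₁, s₂) : R₁ × R₂) • prodSub P Q :=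
        Submodule.smul_mem_pointwise_smul _ _ _ ⟨hn, Q.zero_mem⟩
      exact (h this).1
    · intro y hy
      obtain ⟨n, hn, rfl⟩ := Set.mem_smul_set.mp hy
      have : ((s₁, s₂) : R₁ × R₂) • ((0, n) : M₁ × M₂) ∈
          ((s₁, s₂) : R₁ × R₂) • prodSub P Q :=
        Submodule.smul_mem_pointwise_smul _ _ _ ⟨P.zero_mem, hn⟩
      exact (h this).2
  · rintro ⟨h₁, h₂⟩ x hx
    obtain ⟨n, hn, rfl⟩ := Set.mem_smul_set.mp hx
    exact ⟨h₁ (Set.smul_mem_smul_set hn.1), h₂ (Set.smul_mem_smul_set hn.2)⟩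

lemma sIdempotent_prodSub_iff (S₁ : Submonoid R₁) (S₂ : Submonoid R₂)
    (P : Submodule R₁ M₁) (Q : Submodule R₂ M₂) :
    (prodSub P Q).SIdempotent (S₁.prod S₂) ↔ P.SIdempotent S₁ ∧ Q.SIdempotent S₂ := by
  unfold Submodule.SIdempotent
  rw [colon_prodSub]
  rw [show ((Ideal.prod (P.colon ⊤) (Q.colon ⊤)) ^ 2 •
      (⊤ : Submodule (R₁ × R₂) (M₁ × M₂))) = _ from ideal_prod_sq_smul_top _ _]
  constructor
  · rintro ⟨⟨s₁, s₂⟩, hs, h1, h2⟩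
    rw [Submonoid.mem_prod] at hs
    rw [pointwise_smul_le_iff] at h1
    rw [prodSub_le_prodSub] at h2
    exact ⟨⟨s₁, hs.1, h1.1, h2.1⟩, ⟨s₂, hs.2, h1.2, h2.2⟩⟩
  · rintro ⟨⟨s₁, hs₁, a1, a2⟩, ⟨s₂, hs₂, b1, b2⟩⟩
    exact ⟨(s₁, s₂), Submonoid.mem_prod.mpr ⟨hs₁, hs₂⟩,
      pointwise_smul_le_iff.mpr ⟨a1, b1⟩, prodSub_le_prodSub.mpr ⟨a2, b2⟩⟩

end Aux

/-- `M₁ × M₂` is a fully `S₁ × S₂`-idempotent `R₁ × R₂`-module iff `Mᵢ` is a fully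
`Sᵢ`-idempotent `Rᵢ`-module for `i = 1, 2`. -/
theorem fullySIdempotent_prod
    {R₁ R₂ M₁ M₂ : Type*} [CommRing R₁] [CommRing R₂]
    [AddCommGroup M₁] [Module R₁ M₁] [AddCommGroup M₂] [Module R₂ M₂]
    (S₁ : Submonoid R₁) (S₂ : Submonoid R₂) :
    Module.FullySIdempotent (R₁ × R₂) (M₁ × M₂) (S₁.prod S₂) ↔
      Module.FullySIdempotent R₁ M₁ S₁ ∧ Module.FullySIdempotent R₂ M₂ S₂ := by
  constructor
  · intro h
    constructor
    · intro N₁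
      exact ((sIdempotent_prodSub_iff S₁ S₂ N₁ ⊤).mp (by
        simpa using h (prodSub N₁ ⊤))).1
    · intro N₂
      exact ((sIdempotent_prodSub_iff S₁ S₂ ⊤ N₂).mp (by
        simpa using h (prodSub ⊤ N₂))).2
  · rintro ⟨h₁, h₂⟩ N
    rw [prodSub_fstSub_sndSub N]
    exact (sIdempotent_prodSub_iff S₁ S₂ _ _).mpr ⟨h₁ _, h₂ _⟩
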